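/- Let S be a finite set and l a positive integer. If a function f : S^l → [0,1] satisfies ∑_{s^l ∈ S^l} f(s^l) q(s_1)···q(s_l) ≥ 1 − γ for every probability distribution q on S that is a type of a sequence in S^l (i.e., an empirical distribution of some element of S^l) and some γ ∈ [0,1], then for every s^l ∈ S^l, (1/l!) ∑_{σ ∈ Perm_l} f(σ(s^l)) ≥ 1 − (l+1)^{|S|} · γ, where σ(s^l)_i := s_{σ(i)}. -/

import Mathlib

open Finset


/-- The empirical distribution (type) of the sequence `t : Fin l → S`. -/
noncomputable def empDist {S : Type*} [Fintype S] [DecidableEq S] {l : ℕ}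
    (t : Fin l → S) (s : S) : ℝ :=
  ((Finset.univ.filter fun i => t i = s).card : ℝ) / l

/-- The number of indices `i` with `x i = s`. -/
def cntF {S : Type*} [Fintype S] [DecidableEq S] {l : ℕ} (x : Fin l → S) (s : S) : ℕ :=
  (Finset.univ.filter fun i => x i = s).card

section aux
variable {S : Type*} [Fintype S] [DecidableEq S] {l : ℕ}

lemma cntF_le (x : Fin l → S) (s : S) : cntF x s ≤ l := by
  simpa [cntF] using Finset.card_filter_le Finset.univ (fun i => x i = s)

lemma sum_cntF (x : Fin l → S) : ∑ s, cntF x s = l := by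
  unfold cntF
  rw [← Finset.card_eq_sum_card_fiberwise (f := x) (t := Finset.univ)
    (fun i _ => Finset.mem_univ (x i))]
  simp

lemma cntF_comp_perm (x : Fin l → S) (σ : Equiv.Perm (Fin l)) : cntF (x ∘ σ) = cntF x := by
  funext s
  unfold cntF
  apply Finset.card_bij (fun i _ => σ i)
  · intro i hi
    simp only [Finset.mem_filter, Finset.mem_univ, true_and, Function.comp] at hi ⊢
    exact hi
  · intro i _ j _ hij
    exact σ.injective hij
  · intro j hj
    refine ⟨σ.symm j, ?_, by simp⟩
    simp only [Finset.mem_filter, Finset.mem_univ, true_and, Function.comp] at hj ⊢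
    simpa using hj

lemma exists_perm_of_cntF_eq {x y : Fin l → S} (h : cntF x = cntF y) :
    ∃ σ : Equiv.Perm (Fin l), x ∘ σ = y := by
  have hcard : ∀ s, Fintype.card {i // y i = s} = Fintype.card {i // x i = s} := by
    intro s
    simp only [Fintype.card_subtype]
    exact congrFun h.symm s
  refine ⟨(Equiv.sigmaFiberEquiv y).symm.trans
    ((Equiv.sigmaCongrRight fun s => Fintype.equivOfCardEq (hcard s)).trans
      (Equiv.sigmaFiberEquiv x)), ?_⟩
  funext i
  exact ((Fintype.equivOfCardEq (hcard (y i))) ⟨i, rfl⟩).2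


/-- Permutations stabilizing `x` are products of permutations of the fibers. -/
noncomputable def stabEquiv (x : Fin l → S) :
    {σ : Equiv.Perm (Fin l) // x ∘ ⇑σ = x} ≃ ∀ s : S, Equiv.Perm {i // x i = s} where
  toFun σ s := σ.1.subtypePerm (fun i => by
    rw [show x (σ.1 i) = x i from congrFun σ.2 i])
  invFun π := ⟨(Equiv.sigmaFiberEquiv x).symm.trans
      ((Equiv.sigmaCongrRight π).trans (Equiv.sigmaFiberEquiv x)),
    funext fun i => (π (x i) ⟨i, rfl⟩).2⟩
  left_inv σ := by
    ext i
    rfl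
  right_inv π := by
    funext s
    ext ⟨i, hi⟩
    subst hi
    rfl

lemma card_stab (x : Fin l → S) :
    (Finset.univ.filter fun σ : Equiv.Perm (Fin l) => x ∘ ⇑σ = x).card
      = ∏ s, (cntF x s).factorial := by
  rw [← Fintype.card_subtype, Fintype.card_congr (stabEquiv x), Fintype.card_pi]
  refine Finset.prod_congr rfl fun s _ => ?_
  rw [Fintype.card_perm, Fintype.card_subtype]
  rfl


lemma card_fiber (x y : Fin l → S) (h : cntF y = cntF x) :
    (Finset.univ.filter fun σ : Equiv.Perm (Fin l) => x ∘ ⇑σ = y).card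
      = (Finset.univ.filter fun σ : Equiv.Perm (Fin l) => x ∘ ⇑σ = x).card := by
  obtain ⟨σ0, hσ0⟩ := exists_perm_of_cntF_eq h.symm
  symm
  apply Finset.card_bij (fun σ _ => σ * σ0)
  · intro σ hσ
    simp only [Finset.mem_filter, Finset.mem_univ, true_and] at hσ ⊢
    calc x ∘ ⇑(σ * σ0) = (x ∘ ⇑σ) ∘ ⇑σ0 := rfl
      _ = x ∘ ⇑σ0 := by rw [hσ]
      _ = y := hσ0
  · intro σ1 _ σ2 _ h12
    exact mul_right_cancel h12
  · intro τ hτ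
    simp only [Finset.mem_filter, Finset.mem_univ, true_and] at hτ
    refine ⟨τ * σ0⁻¹, ?_, by group⟩
    simp only [Finset.mem_filter, Finset.mem_univ, true_and]
    calc x ∘ ⇑(τ * σ0⁻¹) = (x ∘ ⇑τ) ∘ ⇑σ0⁻¹ := rfl
      _ = (x ∘ ⇑σ0) ∘ ⇑σ0⁻¹ := by rw [hτ, hσ0]
      _ = x := by funext i; simp

lemma perm_sum (x : Fin l → S) (g : (Fin l → S) → ℝ) :
    ∑ σ : Equiv.Perm (Fin l), g (x ∘ σ) =
      ((Finset.univ.filter fun σ : Equiv.Perm (Fin l) => x ∘ ⇑σ = x).card : ℝ) *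
        ∑ y ∈ Finset.univ.filter fun y : Fin l → S => cntF y = cntF x, g y := by
  rw [← Finset.sum_fiberwise_of_maps_to (g := fun σ : Equiv.Perm (Fin l) => x ∘ ⇑σ)
      (t := (Finset.univ : Finset (Fin l → S))) (fun σ _ => Finset.mem_univ _)
      (fun σ => g (x ∘ ⇑σ))]
  have step1 : ∀ y : Fin l → S,
      ∑ σ ∈ Finset.univ.filter (fun σ : Equiv.Perm (Fin l) => x ∘ ⇑σ = y), g (x ∘ ⇑σ)
        = ((Finset.univ.filter fun σ : Equiv.Perm (Fin l) => x ∘ ⇑σ = y).card : ℝ) * g y := by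
    intro y
    rw [Finset.sum_congr rfl (fun σ hσ => by rw [(Finset.mem_filter.mp hσ).2]),
      Finset.sum_const, nsmul_eq_mul]
  rw [Finset.sum_congr rfl (fun y _ => step1 y)]
  rw [← Finset.sum_filter_add_sum_filter_not Finset.univ (fun y : Fin l → S => cntF y = cntF x)]
  have hzero : ∑ y ∈ Finset.univ.filter (fun y : Fin l → S => ¬ cntF y = cntF x),
      ((Finset.univ.filter fun σ : Equiv.Perm (Fin l) => x ∘ ⇑σ = y).card : ℝ) * g y = 0 := by
    apply Finset.sum_eq_zero
    intro y hy
    simp only [Finset.mem_filter, Finset.mem_univ, true_and] at hy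
    have : (Finset.univ.filter fun σ : Equiv.Perm (Fin l) => x ∘ ⇑σ = y) = ∅ := by
      rw [Finset.filter_eq_empty_iff]
      intro σ _ hσ
      exact hy (hσ ▸ (cntF_comp_perm x σ).symm ▸ cntF_comp_perm x σ)
    rw [this]
    simp
  rw [hzero, add_zero, Finset.mul_sum]
  refine Finset.sum_congr rfl fun y hy => ?_
  simp only [Finset.mem_filter, Finset.mem_univ, true_and] at hy
  rw [card_fiber x y hy]


end aux

section aux2
variable {S : Type*} [Fintype S] [DecidableEq S] {l : ℕ}

lemma prod_comp_cntF (x : Fin l → S) (g : S → ℝ) :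
    ∏ i, g (x i) = ∏ s, g s ^ cntF x s := by
  rw [← Finset.prod_fiberwise_of_maps_to (g := x) (t := Finset.univ)
      (fun i _ => Finset.mem_univ (x i)) (fun i => g (x i))]
  refine (Finset.prod_congr rfl fun s _ => ?_).symm
  rw [Finset.prod_congr rfl (fun i hi => by rw [(Finset.mem_filter.mp hi).2]),
    Finset.prod_const]
  rfl


end aux2

lemma fact_le_pow_mul (b d : ℕ) : (b + d).factorial ≤ b.factorial * (b + d) ^ d := by
  induction d with
  | zero => simp
  | succ d ih =>
    calc (b + (d + 1)).factorial = (b + d + 1) * (b + d).factorial := by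
          rw [← Nat.add_assoc, Nat.factorial_succ]
      _ ≤ (b + d + 1) * (b.factorial * (b + d) ^ d) := Nat.mul_le_mul_left _ ih
      _ ≤ (b + d + 1) * (b.factorial * (b + d + 1) ^ d) := by
          exact Nat.mul_le_mul_left _ (Nat.mul_le_mul_left _
            (Nat.pow_le_pow_left (Nat.le_succ _) d))
      _ = b.factorial * (b + (d + 1)) ^ (d + 1) := by ring
  

lemma key_nat (a b : ℕ) : a ^ b * a.factorial ≤ a ^ a * b.factorial := by
  rcases Nat.le_total a b with h | h
  · obtain ⟨d, rfl⟩ := Nat.exists_eq_add_of_le h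
    calc a ^ (a + d) * a.factorial = a ^ a * (a.factorial * a ^ d) := by ring
      _ ≤ a ^ a * (a.factorial * (a + 1) ^ d) := by
          exact Nat.mul_le_mul_left _ (Nat.mul_le_mul_left _
            (Nat.pow_le_pow_left (Nat.le_succ a) d))
      _ ≤ a ^ a * (a + d).factorial :=
          Nat.mul_le_mul_left _ Nat.factorial_mul_pow_le_factorial
  · obtain ⟨d, rfl⟩ := Nat.exists_eq_add_of_le h
    calc (b + d) ^ b * (b + d).factorial
        ≤ (b + d) ^ b * (b.factorial * (b + d) ^ d) :=
          Nat.mul_le_mul_left _ (fact_le_pow_mul b d)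
      _ = (b + d) ^ (b + d) * b.factorial := by ring


/-- Robustification technique: if `f : S^l → [0,1]` satisfies
`∑_{s^l} f(s^l) q(s_1)⋯q(s_l) ≥ 1-γ` for every type `q` of a sequence in `S^l`
(i.e. every empirical distribution `empDist t`), then for every `s^l`,
`(1/l!) ∑_{σ ∈ Perm_l} f(σ(s^l)) ≥ 1 - (l+1)^{|S|}·γ`, where `σ(s^l)_i = s_{σ(i)}`. -/

theorem stmt_0 {S : Type*} [Fintype S] [DecidableEq S] (l : ℕ) (hl : 0 < l)
    (f : (Fin l → S) → ℝ) (hf : ∀ sl, f sl ∈ Set.Icc (0 : ℝ) 1)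
    (γ : ℝ) (hγ : γ ∈ Set.Icc (0 : ℝ) 1)
    (h : ∀ t : Fin l → S, ∑ sl : Fin l → S, f sl * ∏ i, empDist t (sl i) ≥ 1 - γ) :
    ∀ sl : Fin l → S,
      (1 / (Nat.factorial l : ℝ)) * ∑ σ : Equiv.Perm (Fin l), f (sl ∘ σ) ≥
        1 - ((l : ℝ) + 1) ^ (Fintype.card S) * γ := by
  intro t
  have hl0 : (l : ℝ) ≠ 0 := Nat.cast_ne_zero.mpr hl.ne'
  have hlpos : (0 : ℝ) < l := by exact_mod_cast hl
  set M : ℝ := ((l : ℝ) + 1) ^ (Fintype.card S) with hM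
  have hMpos : 0 < M := pow_pos (by positivity) _
  set q : S → ℝ := empDist t with hq
  set p : (Fin l → S) → ℝ := fun x => ∏ i, q (x i) with hp
  have hqcnt : ∀ s, q s = (cntF t s : ℝ) / l := fun s => rfl
  have hq0 : ∀ s, 0 ≤ q s := fun s => by rw [hqcnt]; positivity
  have hp0 : ∀ x, 0 ≤ p x := fun x => Finset.prod_nonneg fun i _ => hq0 _
  have hpe : ∀ x : Fin l → S, p x = ∏ s, q s ^ cntF x s := fun x => prod_comp_cntF x q
  have hsumq : ∑ s, q s = 1 := by
    simp only [hqcnt]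
    rw [← Finset.sum_div, ← Nat.cast_sum, sum_cntF, div_self hl0]
  have hsum1 : ∑ x : Fin l → S, p x = 1 := by
    have h1 := Finset.prod_univ_sum (fun _ : Fin l => (Finset.univ : Finset S)) (fun _ s => q s)
    rw [Fintype.piFinset_univ] at h1
    calc ∑ x : Fin l → S, p x = ∏ _i : Fin l, ∑ s, q s := h1.symm
      _ = 1 := by rw [Finset.prod_congr rfl fun i _ => hsumq, Finset.prod_const, one_pow]
  -- the class of t and its probability K
  set K : ℝ := ∑ y ∈ Finset.univ.filter fun y : Fin l → S => cntF y = cntF t, p y with hK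
  have hK0 : 0 ≤ K := Finset.sum_nonneg fun y _ => hp0 y
  -- permutation-sum identities
  have hpinv : ∀ x : Fin l → S, ∀ σ : Equiv.Perm (Fin l), p (x ∘ σ) = p x := by
    intro x σ
    rw [hpe, hpe, cntF_comp_perm]
  have hpermp : ∀ x : Fin l → S, (l.factorial : ℝ) * p x
      = ((∏ s, (cntF x s).factorial : ℕ) : ℝ)
        * ∑ y ∈ Finset.univ.filter fun y : Fin l → S => cntF y = cntF x, p y := by
    intro x
    have h1 := perm_sum x p
    rw [Finset.sum_congr rfl (fun σ _ => hpinv x σ), Finset.sum_const, nsmul_eq_mul,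
      Finset.card_univ, Fintype.card_perm, Fintype.card_fin, card_stab] at h1
    exact h1
  -- dominance: every class has probability at most K
  have hdom : ∀ x : Fin l → S,
      (∑ y ∈ Finset.univ.filter fun y : Fin l → S => cntF y = cntF x, p y) ≤ K := by
    intro x
    have hfac : (0 : ℝ) < l.factorial := by exact_mod_cast l.factorial_pos
    have e1 := hpermp x
    have e2t := hpermp t
    rw [← hK] at e2t
    -- rewrite p z as a ratio of naturals
    have hgen : ∀ z : Fin l → S,
        p z = ((∏ s, (cntF t s) ^ (cntF z s) : ℕ) : ℝ) / (l : ℝ) ^ l := by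
      intro z
      rw [hpe z]
      push_cast
      calc ∏ s, q s ^ cntF z s = ∏ s, ((cntF t s : ℝ) ^ cntF z s / (l : ℝ) ^ cntF z s) := by
            refine Finset.prod_congr rfl fun s _ => ?_
            rw [hqcnt s, div_pow]
        _ = (∏ s, (cntF t s : ℝ) ^ cntF z s) / ∏ s, (l : ℝ) ^ cntF z s :=
            Finset.prod_div_distrib _ _
        _ = (∏ s, (cntF t s : ℝ) ^ cntF z s) / (l : ℝ) ^ l := by
            rw [Finset.prod_pow_eq_pow_sum, sum_cntF]
    have hnat : (∏ s, (cntF t s) ^ (cntF x s)) * (∏ s, (cntF t s).factorial)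
        ≤ (∏ s, (cntF t s) ^ (cntF t s)) * (∏ s, (cntF x s).factorial) := by
      rw [← Finset.prod_mul_distrib, ← Finset.prod_mul_distrib]
      exact Finset.prod_le_prod' fun s _ => key_nat (cntF t s) (cntF x s)
    have hkey : p x * ((∏ s, (cntF t s).factorial : ℕ) : ℝ)
        ≤ p t * ((∏ s, (cntF x s).factorial : ℕ) : ℝ) := by
      have hN : (0 : ℝ) < (l : ℝ) ^ l := by positivity
      rw [hgen x, hgen t, div_mul_eq_mul_div, div_mul_eq_mul_div, div_le_div_iff₀ hN hN]
      have hnat' : ((∏ s, (cntF t s) ^ (cntF x s) : ℕ) : ℝ) * ((∏ s, (cntF t s).factorial : ℕ) : ℝ)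
          ≤ ((∏ s, (cntF t s) ^ (cntF t s) : ℕ) : ℝ) * ((∏ s, (cntF x s).factorial : ℕ) : ℝ) := by
        exact_mod_cast hnat
      exact mul_le_mul_of_nonneg_right hnat' hN.le
    have hcx : (0 : ℝ) < ((∏ s, (cntF x s).factorial : ℕ) : ℝ) := by
      have : 0 < ∏ s, (cntF x s).factorial := Finset.prod_pos fun s _ => Nat.factorial_pos _
      exact_mod_cast this
    have hctn : (0 : ℝ) < ((∏ s, (cntF t s).factorial : ℕ) : ℝ) := by
      have : 0 < ∏ s, (cntF t s).factorial := Finset.prod_pos fun s _ => Nat.factorial_pos _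
      exact_mod_cast this
    have h5 : ((∏ s, (cntF t s).factorial : ℕ) : ℝ) * ((l.factorial : ℝ) * p x)
        ≤ ((∏ s, (cntF x s).factorial : ℕ) : ℝ) * ((l.factorial : ℝ) * p t) := by
      nlinarith [mul_le_mul_of_nonneg_left hkey hfac.le]
    rw [e1, e2t] at h5
    nlinarith [h5, mul_pos hctn hcx]
  -- counting classes
  have hK1 : 1 ≤ M * K := by
    have hlt : ∀ (y : Fin l → S) (s : S), cntF y s < l + 1 :=
      fun y s => Nat.lt_succ_of_le (cntF_le y s)
    set cF : (Fin l → S) → (S → Fin (l + 1)) :=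
      fun y s => (⟨cntF y s, hlt y s⟩ : Fin (l + 1)) with hcF
    have hfib := Finset.sum_fiberwise_of_maps_to (s := (Finset.univ : Finset (Fin l → S)))
      (g := cF) (t := (Finset.univ : Finset (S → Fin (l + 1))))
      (fun y _ => Finset.mem_univ _) p
    have hle : ∀ c : S → Fin (l + 1),
        (∑ y ∈ Finset.univ.filter (fun y : Fin l → S => cF y = c), p y) ≤ K := by
      intro c
      by_cases hc : ∃ x : Fin l → S, cF x = c
      · obtain ⟨x, rfl⟩ := hc
        have hfe : Finset.univ.filter (fun y : Fin l → S => cF y = cF x)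
            = Finset.univ.filter (fun y : Fin l → S => cntF y = cntF x) := by
          apply Finset.filter_congr
          intro y _
          simp only [hcF]
          constructor
          · intro hxy
            funext s
            exact congrArg Fin.val (congrFun hxy s)
          · intro hxy
            funext s
            exact Fin.ext (congrFun hxy s)
        rw [hfe]
        exact hdom x
      · have hempty : Finset.univ.filter (fun y : Fin l → S => cF y = c) = ∅ := by
          rw [Finset.filter_eq_empty_iff]
          exact fun y _ hy => hc ⟨y, hy⟩
        rw [hempty, Finset.sum_empty]
        exact hK0
    calc (1 : ℝ)
        = ∑ c : S → Fin (l + 1),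
            ∑ y ∈ Finset.univ.filter (fun y : Fin l → S => cF y = c), p y := by
          rw [hfib, hsum1]
      _ ≤ ∑ _c : S → Fin (l + 1), K := Finset.sum_le_sum fun c _ => hle c
      _ = (Fintype.card (S → Fin (l + 1)) : ℝ) * K := by
          rw [Finset.sum_const, nsmul_eq_mul, Finset.card_univ]
      _ = M * K := by
          rw [Fintype.card_fun, Fintype.card_fin, hM]
          push_cast
          ring
  have hKpos : 0 < K := by nlinarith
  -- main chain
  have hsplit : p t * (∑ y ∈ Finset.univ.filter fun y : Fin l → S => cntF y = cntF t, f y)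
      ≥ K - γ := by
    have hT : ∑ x : Fin l → S, f x * p x ≥ 1 - γ := h t
    have hs0 := Finset.sum_filter_add_sum_filter_not Finset.univ
      (fun y : Fin l → S => cntF y = cntF t) (fun x => f x * p x)
    have hsp := Finset.sum_filter_add_sum_filter_not Finset.univ
      (fun y : Fin l → S => cntF y = cntF t) p
    rw [hsum1, ← hK] at hsp
    have h1 : ∑ y ∈ Finset.univ.filter (fun y : Fin l → S => cntF y = cntF t), f y * p y
        = p t * ∑ y ∈ Finset.univ.filter (fun y : Fin l → S => cntF y = cntF t), f y := by
      rw [Finset.mul_sum]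
      refine Finset.sum_congr rfl fun y hy => ?_
      have hcy : cntF y = cntF t := (Finset.mem_filter.mp hy).2
      rw [hpe y, hcy, ← hpe t, mul_comm]
    have h2 : ∑ y ∈ Finset.univ.filter (fun y : Fin l → S => ¬ cntF y = cntF t), f y * p y
        ≤ ∑ y ∈ Finset.univ.filter (fun y : Fin l → S => ¬ cntF y = cntF t), p y :=
      Finset.sum_le_sum fun y _ => by nlinarith [(hf y).1, (hf y).2, hp0 y]
    rw [h1] at hs0
    linarith [hs0, hT, h2, hsp]
  have hff := perm_sum t f
  have e2 := hpermp t
  set ct : ℕ := ∏ s, (cntF t s).factorial with hct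
  have hctpos : (0 : ℝ) < ct := by
    have : 0 < ct := Finset.prod_pos fun s _ => Nat.factorial_pos _
    exact_mod_cast this
  have hfacpos : (0 : ℝ) < l.factorial := by exact_mod_cast l.factorial_pos
  set F : ℝ := ∑ y ∈ Finset.univ.filter fun y : Fin l → S => cntF y = cntF t, f y with hF
  have hcard : (Finset.univ.filter fun σ : Equiv.Perm (Fin l) => t ∘ ⇑σ = t).card = ct :=
    card_stab t
  rw [← hK] at e2
  rw [hff, hcard, ge_iff_le]
  rw [one_div, inv_mul_eq_div, le_div_iff₀ hfacpos]
  -- goal : (1 - M * γ) * l.factorial ≤ ct * F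
  have key : (ct : ℝ) * F * K ≥ (1 - M * γ) * (l.factorial : ℝ) * K := by
    have e3 : (ct : ℝ) * F * K = (l.factorial : ℝ) * (p t * F) := by
      linear_combination (-F) * e2
    have e4 : (l.factorial : ℝ) * (p t * F) ≥ (l.factorial : ℝ) * (K - γ) :=
      mul_le_mul_of_nonneg_left hsplit hfacpos.le
    have e5 : (l.factorial : ℝ) * (K - γ) ≥ (1 - M * γ) * (l.factorial : ℝ) * K := by
      nlinarith [mul_nonneg (mul_nonneg hfacpos.le hγ.1) (by linarith : (0:ℝ) ≤ M * K - 1)]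
    linarith [e3 ▸ e4]
  exact le_of_mul_le_mul_right (by linarith) hKpos
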